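/- Let a > 0, t > 0, b ≥ 0 and α > 1, and set g(d) = d + ((b − a·|d|)/t)^(1/α) on [−b/a, b/a] with d* = b/a − (1/α)(a/(α t))^(1/(α−1)). If 0 ≤ d* then g is strictly increasing on (−b/a, d*) and strictly decreasing on (d*, b/a). -/

import Mathlib

open Real Set

theorem right_reach_unimodal (a t b α : ℝ) (ha : 0 < a) (ht : 0 < t) (hb : 0 ≤ b) (hα : 1 < α)
    (dstar : ℝ) (hd : dstar = b/a - (1/α) * (a/(α*t)) ^ (1/(α-1)))
    (hd0 : 0 ≤ dstar) :
    StrictMonoOn (fun d : ℝ => d + ((b - a * |d|)/t) ^ (1/α)) (Set.Ioo (-(b/a)) dstar) ∧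
    StrictAntiOn (fun d : ℝ => d + ((b - a * |d|)/t) ^ (1/α)) (Set.Ioo dstar (b/a)) := by
  have hα0 : (0:ℝ) < α := lt_trans one_pos hα
  have hα1 : (0:ℝ) < α - 1 := sub_pos.mpr hα
  set k : ℝ := a/(α*t) with hk
  have hk0 : 0 < k := div_pos ha (mul_pos hα0 ht)
  set c : ℝ := k ^ (1/(α-1)) with hc
  have hc0 : 0 < c := Real.rpow_pos_of_pos hk0 _
  have hdlt : dstar < b/a := by
    rw [hd]
    have := mul_pos (by positivity : (0:ℝ) < 1/α) hc0
    linarith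
  have hba : 0 < b/a := lt_of_le_of_lt hd0 hdlt
  have hb0 : 0 < b := by
    have := mul_pos hba ha
    rwa [div_mul_cancel₀ b ha.ne'] at this
  have hustar : b - a*dstar = t*k*c := by
    rw [hd, hk]; field_simp; ring
  have hkq : k ^ (α/(α-1)) = k * c := by
    rw [hc, show α/(α-1) = 1 + 1/(α-1) by field_simp; ring, Real.rpow_add hk0, Real.rpow_one]
  have hq0 : 0 < k ^ (α/(α-1)) := Real.rpow_pos_of_pos hk0 _
  have hs : 0 < (α-1)/α := div_pos hα1 hα0
  have hexp : 1/α - 1 = -((α-1)/α) := by field_simp; ring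
  have hks : (k ^ (α/(α-1))) ^ ((α-1)/α) = k := by
    rw [← Real.rpow_mul hk0.le, show α/(α-1) * ((α-1)/α) = 1 by field_simp, Real.rpow_one]
  -- derivative of the smooth model function
  set g : ℝ → ℝ := fun y => y + ((b - a*y)/t) ^ (1/α) with hg
  have hderiv : ∀ x : ℝ, b - a*x ≠ 0 →
      HasDerivAt g (1 + -(a/t) * (1/α) * ((b - a*x)/t) ^ (1/α - 1)) x := by
    intro x hx
    have h1 : HasDerivAt (fun y : ℝ => (b - a*y)/t) (-(a/t)) x := by
      have := (((hasDerivAt_id x).const_mul a).const_sub b).div_const t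
      simpa [neg_div] using this
    have h2 := h1.rpow_const (p := 1/α) (Or.inl (div_ne_zero hx ht.ne'))
    exact (hasDerivAt_id' x).add h2
  -- sign lemmas
  have key1 : ∀ u : ℝ, k ^ (α/(α-1)) < u → 0 < 1 + -(a/t) * (1/α) * u ^ (1/α - 1) := by
    intro u hu
    have hu0 : 0 < u := lt_trans hq0 hu
    have h1 : k < u ^ ((α-1)/α) := by
      calc k = (k ^ (α/(α-1))) ^ ((α-1)/α) := hks.symm
        _ < u ^ ((α-1)/α) := Real.rpow_lt_rpow hq0.le hu hs
    have h3 : 0 < u ^ ((α-1)/α) := Real.rpow_pos_of_pos hu0 _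
    have h2 : u ^ (1/α - 1) = (u ^ ((α-1)/α))⁻¹ := by
      rw [hexp, Real.rpow_neg hu0.le]
    rw [h2]
    have h4 : k * (u ^ ((α-1)/α))⁻¹ < 1 := by
      calc k * (u ^ ((α-1)/α))⁻¹ < u ^ ((α-1)/α) * (u ^ ((α-1)/α))⁻¹ :=
            mul_lt_mul_of_pos_right h1 (inv_pos.mpr h3)
        _ = 1 := mul_inv_cancel₀ h3.ne'
    have e : -(a/t) * (1/α) * (u ^ ((α-1)/α))⁻¹ = -(k * (u ^ ((α-1)/α))⁻¹) := by
      rw [hk]; ring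
    rw [e]; linarith
  have key2 : ∀ u : ℝ, 0 < u → u < k ^ (α/(α-1)) →
      1 + -(a/t) * (1/α) * u ^ (1/α - 1) < 0 := by
    intro u hu0 hu
    have h1 : u ^ ((α-1)/α) < k := by
      calc u ^ ((α-1)/α) < (k ^ (α/(α-1))) ^ ((α-1)/α) := Real.rpow_lt_rpow hu0.le hu hs
        _ = k := hks
    have h3 : 0 < u ^ ((α-1)/α) := Real.rpow_pos_of_pos hu0 _
    have h2 : u ^ (1/α - 1) = (u ^ ((α-1)/α))⁻¹ := by
      rw [hexp, Real.rpow_neg hu0.le]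
    rw [h2]
    have h4 : 1 < k * (u ^ ((α-1)/α))⁻¹ := by
      calc 1 = u ^ ((α-1)/α) * (u ^ ((α-1)/α))⁻¹ := (mul_inv_cancel₀ h3.ne').symm
        _ < k * (u ^ ((α-1)/α))⁻¹ := mul_lt_mul_of_pos_right h1 (inv_pos.mpr h3)
    have e : -(a/t) * (1/α) * (u ^ ((α-1)/α))⁻¹ = -(k * (u ^ ((α-1)/α))⁻¹) := by
      rw [hk]; ring
    rw [e]; linarith
  have hcont : Continuous g := by
    apply continuous_id.add
    apply Continuous.rpow_const
    · exact (continuous_const.sub (continuous_const.mul continuous_id)).div_const t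
    · intro x; right; positivity
  -- strict monotonicity of g on [0, dstar]
  have hBg : StrictMonoOn g (Icc 0 dstar) := by
    apply strictMonoOn_of_deriv_pos (convex_Icc 0 dstar) hcont.continuousOn
    intro x hx
    rw [interior_Icc] at hx
    have hux : k ^ (α/(α-1)) < (b - a*x)/t := by
      rw [lt_div_iff₀ ht]
      have h1 : a*x < a*dstar := mul_lt_mul_of_pos_left hx.2 ha
      have h2 : t*k*c = k ^ (α/(α-1)) * t := by rw [hkq]; ring
      linarith
    have h0 : 0 < (b - a*x)/t := lt_trans hq0 hux
    have hpos : 0 < b - a*x := by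
      have := mul_pos h0 ht
      rwa [div_mul_cancel₀ _ ht.ne'] at this
    rw [(hderiv x hpos.ne').deriv]
    exact key1 _ hux
  -- strict antitonicity of g on [dstar, b/a]
  have hCg : StrictAntiOn g (Icc dstar (b/a)) := by
    apply strictAntiOn_of_deriv_neg (convex_Icc dstar (b/a)) hcont.continuousOn
    intro x hx
    rw [interior_Icc] at hx
    have hxb : a*x < b := by
      have := mul_lt_mul_of_pos_left hx.2 ha
      rwa [show a*(b/a) = b by field_simp] at this
    have hu0 : 0 < (b - a*x)/t := div_pos (by linarith) ht
    have hult : (b - a*x)/t < k ^ (α/(α-1)) := by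
      rw [div_lt_iff₀ ht]
      have h1 : a*dstar < a*x := mul_lt_mul_of_pos_left hx.1 ha
      have h2 : t*k*c = k ^ (α/(α-1)) * t := by rw [hkq]; ring
      linarith
    rw [(hderiv x (by linarith : (0:ℝ) < b - a*x).ne').deriv]
    exact key2 _ hu0 hult
  -- transfer to F with absolute value
  set F : ℝ → ℝ := fun d => d + ((b - a * |d|)/t) ^ (1/α) with hF
  have hB : StrictMonoOn F (Icc 0 dstar) := by
    intro x hx y hy hxy
    have := hBg hx hy hxy
    show x + ((b - a * |x|)/t) ^ (1/α) < y + ((b - a * |y|)/t) ^ (1/α)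
    rwa [abs_of_nonneg hx.1, abs_of_nonneg hy.1]
  have hC : StrictAntiOn F (Icc dstar (b/a)) := by
    intro x hx y hy hxy
    have := hCg hx hy hxy
    show y + ((b - a * |y|)/t) ^ (1/α) < x + ((b - a * |x|)/t) ^ (1/α)
    rwa [abs_of_nonneg (hd0.trans hx.1), abs_of_nonneg (hd0.trans hy.1)]
  have hA : StrictMonoOn F (Icc (-(b/a)) 0) := by
    intro x hx y hy hxy
    show x + ((b - a * |x|)/t) ^ (1/α) < y + ((b - a * |y|)/t) ^ (1/α)
    rw [abs_of_nonpos hx.2, abs_of_nonpos hy.2]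
    have hbx : 0 ≤ b + a*x := by
      have : -(b/a) * a ≤ x * a := mul_le_mul_of_nonneg_right hx.1 ha.le
      rw [neg_mul, div_mul_cancel₀ b ha.ne'] at this
      linarith
    have hle : ((b - a * (-x))/t) ^ (1/α) ≤ ((b - a * (-y))/t) ^ (1/α) := by
      apply Real.rpow_le_rpow
      · rw [mul_neg, sub_neg_eq_add]; exact div_nonneg hbx ht.le
      · gcongr
      · positivity
    linarith [hle]
  constructor
  · intro x hx y hy hxy
    rcases lt_or_ge x 0 with hx0 | hx0
    · rcases le_or_gt y 0 with hy0 | hy0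
      · exact hA ⟨hx.1.le, hx0.le⟩ ⟨hy.1.le, hy0⟩ hxy
      · have h1 : F x < F 0 := hA ⟨hx.1.le, hx0.le⟩ ⟨by linarith, le_refl 0⟩ hx0
        have h2 : F 0 < F y := hB ⟨le_refl 0, hd0⟩ ⟨hy0.le, hy.2.le⟩ hy0
        linarith
    · exact hB ⟨hx0, hx.2.le⟩ ⟨hx0.trans hxy.le, hy.2.le⟩ hxy
  · exact hC.mono Ioo_subset_Icc_self
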